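/- Let k be a field, C a k-coalgebra and C* its dual convolution algebra. If H is a simple left C*-module admitting an injective morphism of left C*-modules H → C*, then H is a rational left C*-module. -/

import Mathlib

open TensorProduct Coalgebra

noncomputable section

namespace Paper

variable {k : Type*} [Field k] {C : Type*} [AddCommGroup C] [Module k C] [Coalgebra k C]

/-- The convolution product on the dual of a coalgebra. -/
def conv (f g : Module.Dual k C) : Module.Dual k C :=
  LinearMap.mul' k k ∘ₗ TensorProduct.map f g ∘ₗ comul

lemma conv_apply (f g : Module.Dual k C) (c : C) :
    conv f g c = LinearMap.mul' k k (TensorProduct.map f g (comul c)) := rfl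

private lemma conv_assoc (f g h : Module.Dual k C) : conv (conv f g) h = conv f (conv g h) := by
  have h1 : (LinearMap.mul' k k ∘ₗ TensorProduct.map (conv f g) h : C ⊗[k] C →ₗ[k] k)
      = (LinearMap.mul' k k ∘ₗ TensorProduct.map
          (LinearMap.mul' k k ∘ₗ TensorProduct.map f g) h)
        ∘ₗ (comul (R := k) (A := C)).rTensor C := by
    ext x y
    simp [conv_apply]
  have h2 : (LinearMap.mul' k k ∘ₗ TensorProduct.map f (conv g h) : C ⊗[k] C →ₗ[k] k)
      = (LinearMap.mul' k k ∘ₗ TensorProduct.map f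
          (LinearMap.mul' k k ∘ₗ TensorProduct.map g h))
        ∘ₗ (comul (R := k) (A := C)).lTensor C := by
    ext x y
    simp [conv_apply]
  have h3 : (LinearMap.mul' k k ∘ₗ TensorProduct.map f
          (LinearMap.mul' k k ∘ₗ TensorProduct.map g h))
        ∘ₗ (TensorProduct.assoc k C C C).toLinearMap
      = LinearMap.mul' k k ∘ₗ TensorProduct.map
          (LinearMap.mul' k k ∘ₗ TensorProduct.map f g) h := by
    apply TensorProduct.ext_threefold
    intro x y z
    simp [mul_assoc]
  ext c
  have e1 : conv (conv f g) h c
      = (LinearMap.mul' k k ∘ₗ TensorProduct.map (conv f g) h) (comul c) := rfl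
  have e2 : conv f (conv g h) c
      = (LinearMap.mul' k k ∘ₗ TensorProduct.map f (conv g h)) (comul c) := rfl
  rw [e1, e2, h1, h2]
  simp only [LinearMap.comp_apply]
  rw [← Coalgebra.coassoc_apply (R := k) c]
  exact (LinearMap.congr_fun h3 ((comul (R := k) (A := C)).rTensor C (comul c))).symm

private lemma counit_conv (f : Module.Dual k C) : conv counit f = f := by
  have h1 : (TensorProduct.map (counit (R := k) (A := C)) f : C ⊗[k] C →ₗ[k] k ⊗[k] k)
      = f.lTensor k ∘ₗ (counit (R := k) (A := C)).rTensor C := by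
    ext x y
    simp
  ext c
  rw [conv_apply, h1, LinearMap.comp_apply, Coalgebra.rTensor_counit_comul,
    LinearMap.lTensor_tmul, LinearMap.mul'_apply, one_mul]

private lemma conv_counit (f : Module.Dual k C) : conv f counit = f := by
  have h1 : (TensorProduct.map f (counit (R := k) (A := C)) : C ⊗[k] C →ₗ[k] k ⊗[k] k)
      = f.rTensor k ∘ₗ (counit (R := k) (A := C)).lTensor C := by
    ext x y
    simp
  ext c
  rw [conv_apply, h1, LinearMap.comp_apply, Coalgebra.lTensor_counit_comul,
    LinearMap.rTensor_tmul, LinearMap.mul'_apply, mul_one]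

private lemma conv_add (f g h : Module.Dual k C) : conv f (g + h) = conv f g + conv f h := by
  ext c
  simp only [conv_apply, TensorProduct.map_add_right, LinearMap.add_apply, map_add]

private lemma add_conv (f g h : Module.Dual k C) : conv (f + g) h = conv f h + conv g h := by
  ext c
  simp only [conv_apply, TensorProduct.map_add_left, LinearMap.add_apply, map_add]

private lemma zero_conv (f : Module.Dual k C) : conv 0 f = 0 := by
  ext c
  have : TensorProduct.map (0 : Module.Dual k C) f = 0 := by
    ext x y; simp
  simp [conv_apply, this]

private lemma conv_zero (f : Module.Dual k C) : conv f 0 = 0 := by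
  ext c
  have : TensorProduct.map f (0 : Module.Dual k C) = 0 := by
    ext x y; simp
  simp [conv_apply, this]

/-- The convolution algebra structure on the dual of a coalgebra. -/
instance instRingDual : Ring (Module.Dual k C) where
  __ := (inferInstance : AddCommGroup (Module.Dual k C))
  mul := conv
  one := counit
  mul_assoc := conv_assoc
  one_mul := counit_conv
  mul_one := conv_counit
  left_distrib := conv_add
  right_distrib := add_conv
  zero_mul := zero_conv
  mul_zero := conv_zero

lemma dual_mul_def (f g : Module.Dual k C) : f * g = conv f g := rfl

lemma dual_mul_apply (f g : Module.Dual k C) (c : C) :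
    (f * g) c = LinearMap.mul' k k (TensorProduct.map f g (comul c)) := rfl

lemma dual_one_def : (1 : Module.Dual k C) = counit := rfl

variable {k : Type*} [Field k] {C : Type*} [AddCommGroup C] [Module k C] [Coalgebra k C]

instance : IsScalarTower k (Module.Dual k C) (Module.Dual k C) :=
  ⟨fun a f g => by
    show conv (a • f) g = a • conv f g
    ext c
    simp [conv_apply, TensorProduct.map_smul_left]⟩

/-- For a subset `X ⊆ C`, its orthogonal `X^⊥ ⊆ C*`. -/
def perpC (X : Set C) : Set (Module.Dual k C) := {f | ∀ x ∈ X, f x = 0}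

/-- For a subset `Y ⊆ C*`, its orthogonal `Y^⊥ ⊆ C`. -/
def perpD (Y : Set (Module.Dual k C)) : Set C := {c | ∀ f ∈ Y, f c = 0}

/-- For `h ∈ C*`, the map `c ↦ ∑ c₁ h(c₂)`; this is the canonical left action of `C*` on `C`. -/
def wedge (h : Module.Dual k C) : C →ₗ[k] C :=
  (TensorProduct.rid k C).toLinearMap ∘ₗ h.lTensor C ∘ₗ comul

variable (k C) in
/-- A left `C*`-module `M` is rational if every element `m` admits finitely many
`mᵢ ∈ M`, `cᵢ ∈ C` with `f • m = ∑ᵢ f(cᵢ) • mᵢ` for all `f ∈ C*` (the scalar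
`f (cs i) ∈ k` acting through the `k`-multiple `f (cs i) • 1` of the identity of `C*`). -/
def IsRationalLeft (M : Type*) [AddCommGroup M] [Module (Module.Dual k C) M] : Prop :=
  ∀ m : M, ∃ (n : ℕ) (ms : Fin n → M) (cs : Fin n → C),
    ∀ f : Module.Dual k C, f • m = ∑ i, (f (cs i) • (1 : Module.Dual k C)) • ms i

variable (k C) in
/-- A right `C*`-module (i.e. a left module over the opposite ring) `M` is rational if every
element `m` admits finitely many `mᵢ ∈ M`, `cᵢ ∈ C` with `m • f = ∑ᵢ f(cᵢ) • mᵢ` for all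
`f ∈ C*`. -/
def IsRationalRight (M : Type*) [AddCommGroup M] [Module (Module.Dual k C)ᵐᵒᵖ M] : Prop :=
  ∀ m : M, ∃ (n : ℕ) (ms : Fin n → M) (cs : Fin n → C),
    ∀ f : Module.Dual k C,
      (MulOpposite.op f) • m
        = ∑ i, (MulOpposite.op (f (cs i) • (1 : Module.Dual k C))) • ms i

/-- A ring `R` is a left D-ring if every left ideal is a left annihilator. -/
def IsLeftDRing (R : Type*) [Ring R] : Prop :=
  ∀ I : Ideal R, ∃ H : Set R, (I : Set R) = {r : R | ∀ h ∈ H, r * h = 0}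
section AuxStatement15

variable {k : Type*} [Field k] {C : Type*} [AddCommGroup C] [Module k C] [Coalgebra k C]

private lemma mul_apply_wedge (f h : Module.Dual k C) (c : C) :
    (f * h) c = f (wedge h c) := by
  have key : (LinearMap.mul' k k ∘ₗ TensorProduct.map f h : C ⊗[k] C →ₗ[k] k)
      = f ∘ₗ (TensorProduct.rid k C).toLinearMap ∘ₗ h.lTensor C := by
    ext a b
    simp [mul_comm]
  have : (f * h) c = (LinearMap.mul' k k ∘ₗ TensorProduct.map f h) (comul c) := rfl
  rw [this, key]
  rfl

/-- The "left coefficient" map `C ⊗ N → N`, `c ⊗ n ↦ φ(c) • n`. -/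
private def lcoef (φ : Module.Dual k C) {N : Type*} [AddCommGroup N] [Module k N] :
    C ⊗[k] N →ₗ[k] N :=
  (TensorProduct.lid k N).toLinearMap ∘ₗ φ.rTensor N

private lemma lcoef_tmul (φ : Module.Dual k C) {N : Type*} [AddCommGroup N] [Module k N]
    (c : C) (n : N) : lcoef φ (c ⊗ₜ[k] n) = φ c • n := by
  simp [lcoef]

private lemma lcoef_range {N N' : Type*} [AddCommGroup N] [Module k N] [AddCommGroup N']
    [Module k N'] (j : N →ₗ[k] N') (φ : Module.Dual k C) (z : C ⊗[k] N')
    (hz : z ∈ LinearMap.range (j.lTensor C)) : lcoef φ z ∈ LinearMap.range j := by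
  obtain ⟨u, rfl⟩ := hz
  refine ⟨lcoef φ u, ?_⟩
  have key : (lcoef (k := k) (C := C) φ) ∘ₗ j.lTensor C = j ∘ₗ lcoef φ := by
    ext c n
    simp [lcoef_tmul]
  exact (LinearMap.congr_fun key u).symm

private lemma lcoef_sum_repr_zero {ι : Type*} (b : Module.Basis ι k C) {N : Type*} [AddCommGroup N]
    [Module k N] (t : Finset ι) (u : ι → N) (j : ι) (hj : j ∉ t) :
    lcoef (b.coord j) (∑ i ∈ t, b i ⊗ₜ[k] u i) = 0 := by
  classical
  rw [map_sum]
  refine Finset.sum_eq_zero fun i hi => ?_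
  rw [lcoef_tmul, Module.Basis.coord_apply, Module.Basis.repr_self, Finsupp.single_apply,
    if_neg (by rintro rfl; exact hj hi), zero_smul]

private lemma exists_basis_repr {ι : Type*} (b : Module.Basis ι k C) {N : Type*} [AddCommGroup N]
    [Module k N] (z : C ⊗[k] N) :
    ∃ t : Finset ι, z = ∑ i ∈ t, b i ⊗ₜ[k] lcoef (b.coord i) z := by
  classical
  induction z using TensorProduct.induction_on with
  | zero => exact ⟨∅, by simp⟩
  | tmul c n =>
    refine ⟨(b.repr c).support, ?_⟩
    have hc : (∑ i ∈ (b.repr c).support, (b.repr c) i • b i) = c := by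
      have h1 := b.linearCombination_repr c
      rwa [Finsupp.linearCombination_apply, Finsupp.sum] at h1
    conv_lhs => rw [← hc]
    rw [TensorProduct.sum_tmul]
    refine Finset.sum_congr rfl fun i _ => ?_
    rw [lcoef_tmul, Module.Basis.coord_apply, TensorProduct.smul_tmul]
  | add z1 z2 h1 h2 =>
    obtain ⟨t1, e1⟩ := h1
    obtain ⟨t2, e2⟩ := h2
    refine ⟨t1 ∪ t2, ?_⟩
    have sub1 : ∑ i ∈ t1 ∪ t2, b i ⊗ₜ[k] lcoef (b.coord i) z1
        = ∑ i ∈ t1, b i ⊗ₜ[k] lcoef (b.coord i) z1 := by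
      refine (Finset.sum_subset Finset.subset_union_left fun i _ hi => ?_).symm
      rw [e1, lcoef_sum_repr_zero b t1 _ i hi, TensorProduct.tmul_zero]
    have sub2 : ∑ i ∈ t1 ∪ t2, b i ⊗ₜ[k] lcoef (b.coord i) z2
        = ∑ i ∈ t2, b i ⊗ₜ[k] lcoef (b.coord i) z2 := by
      refine (Finset.sum_subset Finset.subset_union_right fun i _ hi => ?_).symm
      rw [e2, lcoef_sum_repr_zero b t2 _ i hi, TensorProduct.tmul_zero]
    calc z1 + z2 = ∑ i ∈ t1 ∪ t2, b i ⊗ₜ[k] lcoef (b.coord i) z1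
          + ∑ i ∈ t1 ∪ t2, b i ⊗ₜ[k] lcoef (b.coord i) z2 := by rw [sub1, sub2, ← e1, ← e2]
      _ = ∑ i ∈ t1 ∪ t2, b i ⊗ₜ[k] lcoef (b.coord i) (z1 + z2) := by
          rw [← Finset.sum_add_distrib]
          refine Finset.sum_congr rfl fun i _ => ?_
          rw [map_add, TensorProduct.tmul_add]

private lemma comul_comp_wedge (x : Module.Dual k C) :
    (comul (R := k) (A := C)) ∘ₗ wedge x = (wedge x).lTensor C ∘ₗ comul := by
  have stepAB : (comul (R := k) (A := C)) ∘ₗ (TensorProduct.rid k C).toLinearMap ∘ₗ x.lTensor C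
      = (TensorProduct.rid k (C ⊗[k] C)).toLinearMap ∘ₗ x.lTensor (C ⊗[k] C)
        ∘ₗ (comul (R := k) (A := C)).rTensor C := by
    ext a b
    simp
  have stepD : (TensorProduct.rid k (C ⊗[k] C)).toLinearMap ∘ₗ x.lTensor (C ⊗[k] C)
        ∘ₗ (TensorProduct.assoc k C C C).symm.toLinearMap
      = LinearMap.lTensor C ((TensorProduct.rid k C).toLinearMap ∘ₗ x.lTensor C) := by
    ext a b c
    simp [TensorProduct.smul_tmul']
  ext c
  have e1 : ((comul (R := k) (A := C)) ∘ₗ wedge x) c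
      = ((comul (R := k) (A := C)) ∘ₗ (TensorProduct.rid k C).toLinearMap ∘ₗ x.lTensor C)
        (comul c) := rfl
  rw [e1, stepAB]
  simp only [LinearMap.comp_apply]
  rw [← Coalgebra.coassoc_symm_apply (R := k) c]
  have h2 := LinearMap.congr_fun stepD ((comul (R := k) (A := C)).lTensor C (comul c))
  simp only [LinearMap.comp_apply, LinearEquiv.coe_coe] at h2
  simp only [LinearEquiv.coe_coe]
  rw [h2]
  have e2 : LinearMap.lTensor C ((TensorProduct.rid k C).toLinearMap ∘ₗ x.lTensor C) ∘ₗ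
      LinearMap.lTensor C (comul (R := k) (A := C)) = LinearMap.lTensor C (wedge x) := by
    rw [← LinearMap.lTensor_comp]
    rfl
  have e3 := LinearMap.congr_fun e2 (comul c)
  simp only [LinearMap.comp_apply] at e3
  rw [e3]

private lemma comul_mem_of_mem_rangeWedge (x : Module.Dual k C) {v : C}
    (hv : v ∈ LinearMap.range (wedge x)) :
    comul (R := k) v ∈ LinearMap.range (((LinearMap.range (wedge x)).subtype).lTensor C) := by
  obtain ⟨c, rfl⟩ := hv
  have h1 : comul (R := k) (wedge x c) = (wedge x).lTensor C (comul c) :=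
    LinearMap.congr_fun (comul_comp_wedge x) c
  have h2 : wedge x = (LinearMap.range (wedge x)).subtype ∘ₗ (wedge x).rangeRestrict := rfl
  rw [h1, h2, LinearMap.lTensor_comp]
  exact ⟨((wedge x).rangeRestrict).lTensor C (comul c), rfl⟩

private lemma comul_lcoef (φ : Module.Dual k C) (z : C ⊗[k] C) :
    comul (R := k) (lcoef φ z) = lcoef φ ((comul (R := k) (A := C)).lTensor C z) := by
  have key : (comul (R := k) (A := C)) ∘ₗ (lcoef (k := k) (C := C) φ (N := C))
      = lcoef φ (N := C ⊗[k] C) ∘ₗ (comul (R := k) (A := C)).lTensor C := by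
    ext c d
    simp [lcoef_tmul]
  exact LinearMap.congr_fun key z

private lemma assoc_tmul_mem (S : Submodule k C) (ζ : C ⊗[k] C) {s : C} (hs : s ∈ S) :
    (TensorProduct.assoc k C C C) (ζ ⊗ₜ[k] s)
      ∈ LinearMap.range ((((S.subtype).lTensor C)).lTensor C) := by
  induction ζ using TensorProduct.induction_on with
  | zero => rw [TensorProduct.zero_tmul, map_zero]; exact Submodule.zero_mem _
  | tmul u v =>
    exact ⟨u ⊗ₜ[k] (v ⊗ₜ[k] (⟨s, hs⟩ : S)), by simp⟩
  | add z1 z2 h1 h2 =>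
    rw [TensorProduct.add_tmul, map_add]
    exact Submodule.add_mem _ h1 h2

private lemma exists_findim_subcomodule (x : Module.Dual k C) (w : C)
    (hw : w ∈ LinearMap.range (wedge x)) :
    ∃ S : Submodule k C, S ≤ LinearMap.range (wedge x) ∧ FiniteDimensional k S ∧ w ∈ S ∧
      ∀ s ∈ S, comul (R := k) s ∈ LinearMap.range ((S.subtype).lTensor C) := by
  classical
  set W := LinearMap.range (wedge x) with hWdef
  set b := Module.Basis.ofVectorSpace k C with hbdef
  set z := comul (R := k) w with hzdef
  obtain ⟨t, hz⟩ := exists_basis_repr b z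
  set y : _ → C := fun i => lcoef (b.coord i) z with hydef
  have hyW : ∀ i, y i ∈ W := fun i =>
    (Submodule.range_subtype W) ▸ lcoef_range W.subtype (b.coord i) z
      (comul_mem_of_mem_rangeWedge x hw)
  refine ⟨Submodule.span k (y '' ↑t), ?_, ?_, ?_, ?_⟩
  · rw [Submodule.span_le]
    rintro - ⟨i, -, rfl⟩
    exact hyW i
  · exact FiniteDimensional.span_of_finite k (t.finite_toSet.image y)
  · have hw' : w = lcoef counit z := by
      rw [hzdef, lcoef, LinearMap.comp_apply, Coalgebra.rTensor_counit_comul]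
      simp
    rw [hw', hz, map_sum]
    refine Submodule.sum_mem _ fun i hi => ?_
    rw [lcoef_tmul]
    exact Submodule.smul_mem _ _ (Submodule.subset_span ⟨i, hi, rfl⟩)
  · set S := Submodule.span k (y '' ↑t) with hSdef
    have hyS : ∀ i ∈ t, y i ∈ S := fun i hi => Submodule.subset_span ⟨i, hi, rfl⟩
    have main : ∀ i ∈ t, comul (R := k) (y i)
        ∈ LinearMap.range ((S.subtype).lTensor C) := by
      intro i hi
      simp only [hydef]
      rw [hzdef, comul_lcoef, ← Coalgebra.coassoc_apply]
      refine lcoef_range ((S.subtype).lTensor C) (b.coord i) _ ?_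
      rw [← hzdef, hz, map_sum, map_sum]
      refine Submodule.sum_mem _ fun j hj => ?_
      rw [LinearMap.rTensor_tmul]
      exact assoc_tmul_mem S _ (hyS j hj)
    intro s hs
    have : S ≤ Submodule.comap (comul (R := k) (A := C))
        (LinearMap.range ((S.subtype).lTensor C)) := by
      rw [hSdef, Submodule.span_le]
      rintro - ⟨i, hi, rfl⟩
      exact main i hi
    exact this hs
private lemma mul_eval_zero (f h : Module.Dual k C) (S : Submodule k C)
    (hh : ∀ s ∈ S, h s = 0) (s : C)
    (hs : comul (R := k) s ∈ LinearMap.range ((S.subtype).lTensor C)) : (f * h) s = 0 := by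
  obtain ⟨u, hu⟩ := hs
  have e : (f * h) s = (LinearMap.mul' k k ∘ₗ TensorProduct.map f h) (comul s) := rfl
  rw [e, ← hu]
  have key : (LinearMap.mul' k k ∘ₗ TensorProduct.map f h) ∘ₗ (S.subtype).lTensor C = 0 := by
    ext c s'
    simp [hh (s' : C) s'.2]
  simpa using LinearMap.congr_fun key u

private lemma exists_section (T : C →ₗ[k] C) :
    ∃ σ : LinearMap.range T →ₗ[k] C, ∀ v : LinearMap.range T, T (σ v) = (v : C) := by
  obtain ⟨σ, hσ⟩ := T.rangeRestrict.exists_rightInverse_of_surjective T.range_rangeRestrict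
  refine ⟨σ, fun v => ?_⟩
  have h1 := LinearMap.congr_fun hσ v
  have h2 := congrArg (Subtype.val) h1
  simpa using h2

end AuxStatement15
universe v

set_option maxHeartbeats 1600000 in
/-- If `H` is a simple left `C*`-module admitting an injective morphism
of left `C*`-modules `H → C*`, then `H` is rational. -/
theorem statement15 {k : Type*} [Field k] {C : Type*} [AddCommGroup C] [Module k C]
    [Coalgebra k C] (H : Type v) [AddCommGroup H] [Module (Module.Dual k C) H]
    (hsimple : IsSimpleModule (Module.Dual k C) H)
    (g : H →ₗ[Module.Dual k C] Module.Dual k C) (hg : Function.Injective g) :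
    IsRationalLeft k C H := by
  classical
  haveI := hsimple
  haveI : Nontrivial H := IsSimpleModule.nontrivial (Module.Dual k C) H
  obtain ⟨m, hm⟩ := exists_ne (0 : H)
  set x : Module.Dual k C := g m with hxdef
  have hx : x ≠ 0 := by
    intro h0
    apply hm
    apply hg
    rw [map_zero, ← hxdef]
    exact h0
  have hmP : m ∈ Submodule.comap g (Submodule.span (Module.Dual k C) {x}) := by
    rw [Submodule.mem_comap, ← hxdef]
    exact Submodule.mem_span_singleton_self x
  have hPsub : Submodule.comap g (Submodule.span (Module.Dual k C) {x}) = ⊤ := by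
    rcases eq_bot_or_eq_top (Submodule.comap g (Submodule.span (Module.Dual k C) {x})) with
      hb | ht
    · rw [hb, Submodule.mem_bot] at hmP
      exact absurd hmP hm
    · exact ht
  have hP : ∀ u : H, ∃ h : Module.Dual k C, g u = h * x := by
    intro u
    have h1 : u ∈ (⊤ : Submodule (Module.Dual k C) H) := Submodule.mem_top
    rw [← hPsub] at h1
    obtain ⟨a, ha⟩ := Submodule.mem_span_singleton.mp h1
    exact ⟨a, by rw [← ha, smul_eq_mul]⟩
  -- a nonzero element of the range of `wedge x`
  have hwex : ∃ c0 : C, wedge x c0 ≠ 0 := by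
    by_contra hcon
    push_neg at hcon
    apply hx
    ext c
    calc x c = ((1 : Module.Dual k C) * x) c := by rw [one_mul]
      _ = (1 : Module.Dual k C) (wedge x c) := mul_apply_wedge _ _ _
      _ = 0 := by rw [hcon c, map_zero]
      _ = (0 : Module.Dual k C) c := rfl
  obtain ⟨c0, hw0⟩ := hwex
  obtain ⟨S, hSW, hSfin, hwS, hScomod⟩ :=
    exists_findim_subcomodule x (wedge x c0) ⟨c0, rfl⟩
  haveI : FiniteDimensional k S := hSfin
  -- the submodule `N` of `H`
  set N : Submodule (Module.Dual k C) H :=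
    { carrier := {u | ∀ c : C, wedge x c ∈ S → g u c = 0}
      add_mem' := by
        intro a b ha hb c hc
        rw [map_add, LinearMap.add_apply, ha c hc, hb c hc, add_zero]
      zero_mem' := by
        intro c _
        simp
      smul_mem' := by
        intro f u hu c hc
        obtain ⟨h, hh⟩ := hP u
        have hhS : ∀ s ∈ S, h s = 0 := by
          intro s hs
          obtain ⟨c', hc'⟩ := hSW hs
          have := hu c' (by rw [hc']; exact hs)
          rw [hh, mul_apply_wedge, hc'] at this
          exact this
        have e1 : g (f • u) = (f * h) * x := by
          rw [map_smul, smul_eq_mul, hh, mul_assoc]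
        rw [e1, mul_apply_wedge]
        exact mul_eval_zero f h S hhS _ (hScomod _ hc) } with hNdef
  have hNbot : N = ⊥ := by
    rcases eq_bot_or_eq_top N with hb | ht
    · exact hb
    · exfalso
      obtain ⟨φ0, hφ0⟩ : ∃ φ0 : Module.Dual k C, φ0 (wedge x c0) ≠ 0 := by
        by_contra hcon
        push_neg at hcon
        exact hw0 ((Module.forall_dual_apply_eq_zero_iff k _).mp hcon)
      have hmem : (φ0 • m) ∈ N := by rw [ht]; exact Submodule.mem_top
      have h2 : g (φ0 • m) c0 = 0 := hmem c0 hwS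
      rw [map_smul, smul_eq_mul, ← hxdef, mul_apply_wedge] at h2
      exact hφ0 h2
  have hker : ∀ u : H, (∀ c : C, wedge x c ∈ S → g u c = 0) → u = 0 := by
    intro u hu
    have h1 : u ∈ N := hu
    rw [hNbot, Submodule.mem_bot] at h1
    exact h1
  -- a linear section of `wedge x` over its range, restricted to `S`
  obtain ⟨σ, hσ⟩ := exists_section (wedge x)
  set j : S →ₗ[k] C := σ ∘ₗ Submodule.inclusion hSW with hjdef
  have hj : ∀ s : S, wedge x (j s) = (s : C) := fun s => hσ (Submodule.inclusion hSW s)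
  -- the range of `g` is finite-dimensional over `k`
  set Ik : Submodule k (Module.Dual k C) :=
    Submodule.restrictScalars k (LinearMap.range g) with hIkdef
  haveI hIfin : FiniteDimensional k Ik := by
    refine FiniteDimensional.of_injective
      ((LinearMap.lcomp k k j ∘ₗ Ik.subtype : Ik →ₗ[k] Module.Dual k S)) ?_
    rw [← LinearMap.ker_eq_bot]
    refine (Submodule.eq_bot_iff _).mpr fun y hy => ?_
    obtain ⟨u, hu⟩ := y.2
    obtain ⟨h, hh⟩ := hP u
    have hy' : ∀ s : S, (y : Module.Dual k C) (j s) = 0 := by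
      intro s
      have := LinearMap.congr_fun (LinearMap.mem_ker.mp hy) s
      simpa using this
    have hhS : ∀ s ∈ S, h s = 0 := by
      intro s hs
      have h3 := hy' ⟨s, hs⟩
      rw [← hu, hh, mul_apply_wedge, hj ⟨s, hs⟩] at h3
      exact h3
    have hu0 : u = 0 := by
      refine hker u fun c hc => ?_
      rw [hh, mul_apply_wedge]
      exact hhS _ hc
    have : (y : Module.Dual k C) = 0 := by rw [← hu, hu0, map_zero]
    exact Subtype.ext this
  -- now prove rationality
  intro m'
  set y : Module.Dual k C := g m' with hydef
  set Λ : Module.Dual k C →ₗ[k] Module.Dual k C :=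
    { toFun := fun h => h * y
      map_add' := fun a b => add_mul a b y
      map_smul' := fun a h => by simp [smul_mul_assoc] } with hΛdef
  set E : Submodule k (Module.Dual k C) := LinearMap.range Λ with hEdef
  have hEI : E ≤ Ik := by
    rintro z ⟨h, rfl⟩
    exact ⟨h • m', by rw [map_smul, smul_eq_mul]; rfl⟩
  haveI : FiniteDimensional k E := Submodule.finiteDimensional_of_le hEI
  set Wy : Submodule k C := LinearMap.range (wedge y) with hWydef
  obtain ⟨σy, hσy⟩ := exists_section (wedge y)
  haveI hWyfin : FiniteDimensional k Wy := by
    refine FiniteDimensional.of_injective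
      ((LinearMap.lcomp k k E.subtype ∘ₗ Module.Dual.eval k C ∘ₗ σy :
        Wy →ₗ[k] Module.Dual k E)) ?_
    rw [← LinearMap.ker_eq_bot]
    refine (Submodule.eq_bot_iff _).mpr fun v hv => ?_
    have hall : ∀ h : Module.Dual k C, h (v : C) = 0 := by
      intro h
      have h1 := LinearMap.congr_fun (LinearMap.mem_ker.mp hv) (⟨h * y, ⟨h, rfl⟩⟩ : E)
      simp only [LinearMap.comp_apply, LinearMap.lcomp_apply, Module.Dual.eval_apply,
        Submodule.coe_subtype, LinearMap.zero_apply] at h1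
      rwa [mul_apply_wedge, hσy v] at h1
    exact Subtype.ext ((Module.forall_dual_apply_eq_zero_iff k _).mp hall)
  set bW := Module.finBasis k Wy with hbWdef
  choose hvec hvecspec using fun i => LinearMap.exists_extend ((bW.coord i))
  refine ⟨Module.finrank k Wy, fun i => hvec i • m', fun i => ((bW i : C)), fun f => ?_⟩
  apply hg
  have hRHS : ∀ i, g ((f ((bW i : C)) • (1 : Module.Dual k C)) • (hvec i • m'))
      = f ((bW i : C)) • (hvec i * y) := by
    intro i
    rw [map_smul, map_smul, smul_eq_mul, smul_eq_mul, smul_mul_assoc, one_mul, ← hydef]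
  rw [map_smul, smul_eq_mul, ← hydef, map_sum]
  rw [Finset.sum_congr rfl fun i _ => hRHS i]
  ext c
  have hv : wedge y c ∈ Wy := ⟨c, rfl⟩
  have hvecval : ∀ i, hvec i (wedge y c) = bW.repr ⟨wedge y c, hv⟩ i := by
    intro i
    have := LinearMap.congr_fun (hvecspec i) ⟨wedge y c, hv⟩
    simpa [Module.Basis.coord_apply] using this
  have hL : (f * y) c = ∑ i, (bW.repr ⟨wedge y c, hv⟩ i) * f ((bW i : C)) := by
    rw [mul_apply_wedge]
    have hsum := bW.sum_repr ⟨wedge y c, hv⟩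
    have hsum' : wedge y c = ∑ i, (bW.repr ⟨wedge y c, hv⟩ i) • ((bW i : C)) := by
      have := congrArg (Subtype.val) hsum
      simpa only [Submodule.coe_sum, Submodule.coe_smul] using this.symm
    conv_lhs => rw [hsum']
    rw [map_sum]
    refine Finset.sum_congr rfl fun i _ => ?_
    rw [map_smul, smul_eq_mul]
  have hR : (∑ i, f ((bW i : C)) • (hvec i * y)) c
      = ∑ i, f ((bW i : C)) * (bW.repr ⟨wedge y c, hv⟩ i) := by
    rw [LinearMap.sum_apply]
    refine Finset.sum_congr rfl fun i _ => ?_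
    rw [LinearMap.smul_apply, mul_apply_wedge, hvecval i, smul_eq_mul]
  rw [hL, hR]
  exact Finset.sum_congr rfl fun i _ => mul_comm _ _

end Paper
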